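/- Let $X$ be a locally uniformly convex complex Banach space. Then every point of the unit sphere $S_X$ is a strong peak point for $\mathcal{A}_u(B_X)$: for each $x \in S_X$ there exists $f \in \mathcal{A}_u(B_X)$ with $\|f\| = |f(x)|$ such that every sequence $\{x_n\} \subseteq B_X$ with $|f(x_n)| \to \|f\|$ converges to $x$. -/

import Mathlib

open Filter Metric

/-- in a locally uniformly convex complex Banach space, every point
of the unit sphere is a strong peak point for `𝒜_u(B_X)` (bounded functions on
the closed unit ball, holomorphic on the open ball and uniformly continuous on
the closed ball). -/
theorem stmt_7 {X : Type*} [NormedAddCommGroup X] [NormedSpace ℂ X] [CompleteSpace X]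
    (hluc : ∀ x : X, ‖x‖ = 1 → ∀ u : ℕ → X, (∀ n, ‖u n‖ ≤ 1) →
      Tendsto (fun n => ‖u n + x‖) atTop (nhds 2) → Tendsto u atTop (nhds x)) :
    ∀ x : X, ‖x‖ = 1 → ∃ f : X → ℂ,
      DifferentiableOn ℂ f (ball (0 : X) 1) ∧
      UniformContinuousOn f (closedBall (0 : X) 1) ∧
      (∃ M : ℝ, ∀ y ∈ closedBall (0 : X) 1, ‖f y‖ ≤ M) ∧
      0 < ‖f x‖ ∧
      IsLUB {r : ℝ | ∃ y : X, ‖y‖ ≤ 1 ∧ r = ‖f y‖} ‖f x‖ ∧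
      (∀ u : ℕ → X, (∀ n, ‖u n‖ ≤ 1) →
        Tendsto (fun n => ‖f (u n)‖) atTop (nhds ‖f x‖) → Tendsto u atTop (nhds x)) := by
  intro x hx
  have hx0 : x ≠ 0 := by
    intro h; rw [h, norm_zero] at hx; norm_num at hx
  obtain ⟨g, hg1, hgx⟩ := exists_dual_vector ℂ x (norm_ne_zero_iff.mpr hx0)
  have hgx1 : g x = 1 := by rw [hgx, hx]; norm_num
  refine ⟨fun y => (1 + g y) / 2, ?_, ?_, ?_, ?_, ?_, ?_⟩
  · have heq : (fun y : X => (1 + g y) / 2) = fun y : X => (1 + g y) * (2:ℂ)⁻¹ := by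
      funext y; ring
    rw [heq]
    intro y _
    exact ((g.differentiableAt.const_add 1).mul_const ((2:ℂ)⁻¹)).differentiableWithinAt
  · have huc : UniformContinuous (fun y : X => (1 + g y) / 2) :=
      (uniformContinuous_const.add g.uniformContinuous).div_const' 2
    exact huc.mono_left inf_le_left
  · refine ⟨1, fun y hy => ?_⟩
    have hy1 : ‖y‖ ≤ 1 := by simpa using hy
    have hgy : ‖g y‖ ≤ 1 := by
      calc ‖g y‖ ≤ ‖g‖ * ‖y‖ := g.le_opNorm y
        _ ≤ 1 := by rw [hg1]; simpa using hy1
    calc ‖(1 + g y) / 2‖ = ‖1 + g y‖ / 2 := by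
          rw [norm_div]; norm_num
      _ ≤ (1 + ‖g y‖) / 2 := by
          gcongr; simpa using norm_add_le (1:ℂ) (g y)
      _ ≤ 1 := by linarith
  · simp [hgx1]
  · have hfx : ‖(1 + g x) / 2‖ = 1 := by rw [hgx1]; norm_num
    rw [hfx]
    constructor
    · rintro r ⟨y, hy1, rfl⟩
      have hgy : ‖g y‖ ≤ 1 := by
        calc ‖g y‖ ≤ ‖g‖ * ‖y‖ := g.le_opNorm y
          _ ≤ 1 := by rw [hg1]; simpa using hy1
      calc ‖(1 + g y) / 2‖ = ‖1 + g y‖ / 2 := by rw [norm_div]; norm_num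
        _ ≤ (1 + ‖g y‖) / 2 := by gcongr; simpa using norm_add_le (1:ℂ) (g y)
        _ ≤ 1 := by linarith
    · intro b hb
      exact hb ⟨x, le_of_eq hx, hfx.symm⟩
  · intro u hu htend
    have hfx : ‖(1 + g x) / 2‖ = 1 := by rw [hgx1]; norm_num
    rw [hfx] at htend
    apply hluc x hx u hu
    have hlow : ∀ n, 2 * ‖(1 + g (u n)) / 2‖ ≤ ‖u n + x‖ := by
      intro n
      have : ‖g (u n + x)‖ ≤ ‖g‖ * ‖u n + x‖ := g.le_opNorm _
      rw [hg1, one_mul] at this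
      have h2 : ‖g (u n + x)‖ = 2 * ‖(1 + g (u n)) / 2‖ := by
        rw [map_add, hgx1, norm_div]
        simp [add_comm]
        ring
      linarith [h2 ▸ this]
    have hup : ∀ n, ‖u n + x‖ ≤ 2 := by
      intro n
      calc ‖u n + x‖ ≤ ‖u n‖ + ‖x‖ := norm_add_le _ _
        _ ≤ 2 := by rw [hx]; linarith [hu n]
    have hl : Tendsto (fun n => 2 * ‖(1 + g (u n)) / 2‖) atTop (nhds 2) := by
      have := htend.const_mul (2:ℝ)
      simpa using this
    exact tendsto_of_tendsto_of_tendsto_of_le_of_le hl tendsto_const_nhds hlow hup
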